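/- (Våge-type inequality) Let A be an index type and a : (A →₀ ℕ) → ℝ a superexponential positive function. Let p, q ∈ ℕ with p ≥ q and suppose S := ∑_{α ∈ A →₀ ℕ} a_α^{−(p−q)} < ∞. Then for all f, g : (A →₀ ℕ) → ℂ with ‖f‖_q < ∞ and ‖g‖_p < ∞, the convolution f*g satisfies ∑_{γ} |∑_{α+β=γ} f_α g_β|² a_γ^{−p} ≤ S · (∑_{α} |f_α|² a_α^{−q}) · (∑_{β} |g_β|² a_β^{−p}); in particular ‖f*g‖_p ≤ √S · ‖f‖_q · ‖g‖_p. -/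

import Mathlib

open scoped ENNReal

/-- The convolution (Cauchy product) of two families indexed by the free commutative
monoid `A →₀ ℕ`, i.e. multiplication in `MvPowerSeries A ℂ`. -/
noncomputable def conv {A : Type*} [DecidableEq A] (f g : (A →₀ ℕ) → ℂ) : (A →₀ ℕ) → ℂ :=
  fun γ => ∑ x ∈ Finset.HasAntidiagonal.antidiagonal γ, f x.1 * g x.2

/-- The squared weighted `ℓ²`-norm `‖f‖_p² = ∑' α, |f α|² a α ^ (-p)`, as a sum in `[0,∞]`. -/
noncomputable def wsum {A : Type*} (a : (A →₀ ℕ) → ℝ) (p : ℕ) (f : (A →₀ ℕ) → ℂ) : ℝ≥0∞ :=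
  ∑' α, ENNReal.ofReal (‖f α‖ ^ 2 / (a α) ^ p)

/-- Cauchy product formula for `ℝ≥0∞`-valued sums over a type with antidiagonals. -/
lemma enn_cauchy {ι : Type*} [AddCommMonoid ι] [Finset.HasAntidiagonal ι]
    (F G : ι → ℝ≥0∞) :
    ∑' γ, ∑ x ∈ Finset.HasAntidiagonal.antidiagonal γ, F x.1 * G x.2 = (∑' α, F α) * ∑' β, G β := by
  have h1 : ∀ γ : ι, ∑ x ∈ Finset.HasAntidiagonal.antidiagonal γ, F x.1 * G x.2
      = ∑' x : (Finset.HasAntidiagonal.antidiagonal γ : Finset (ι × ι)), F (x : ι × ι).1 * G (x : ι × ι).2 := by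
    intro γ
    rw [tsum_fintype]
    exact (Finset.sum_coe_sort _ _).symm
  calc ∑' γ, ∑ x ∈ Finset.HasAntidiagonal.antidiagonal γ, F x.1 * G x.2
      = ∑' (γ : ι) (x : (Finset.HasAntidiagonal.antidiagonal γ : Finset (ι × ι))),
          F (x : ι × ι).1 * G (x : ι × ι).2 := by simp_rw [h1]
    _ = ∑' y : Σ γ : ι, (Finset.HasAntidiagonal.antidiagonal γ : Finset (ι × ι)),
          F (y.2 : ι × ι).1 * G (y.2 : ι × ι).2 :=
          (ENNReal.tsum_sigma' (fun y : Σ γ : ι, (Finset.HasAntidiagonal.antidiagonal γ : Finset (ι × ι)) =>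
            F (y.2 : ι × ι).1 * G (y.2 : ι × ι).2)).symm
    _ = ∑' x : ι × ι, F x.1 * G x.2 := by
        rw [← Finset.HasAntidiagonal.sigmaAntidiagonalEquivProd.tsum_eq (fun x : ι × ι => F x.1 * G x.2)]
        rfl
    _ = (∑' α, F α) * ∑' β, G β := by
        rw [ENNReal.tsum_prod']
        simp_rw [ENNReal.tsum_mul_left, ENNReal.tsum_mul_right]

/-- (Våge-type inequality) If `a` is superexponential and positive, `p ≥ q`, and
`S = ∑_α a α ^ (-(p-q)) < ∞`, then `‖f * g‖_p² ≤ S ⬝ ‖f‖_q² ⬝ ‖g‖_p²`, and in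
particular `‖f * g‖_p ≤ √S ⬝ ‖f‖_q ⬝ ‖g‖_p`. -/
theorem vage_inequality {A : Type*} [DecidableEq A] (a : (A →₀ ℕ) → ℝ)
    (hpos : ∀ α, 0 < a α)
    (hsup : ∀ α β : A →₀ ℕ, a α * a β ≤ a (α + β))
    (p q : ℕ) (hpq : q ≤ p)
    (hS : Summable fun α : A →₀ ℕ => 1 / (a α) ^ (p - q))
    (f g : (A →₀ ℕ) → ℂ)
    (hf : wsum a q f < ⊤) (hg : wsum a p g < ⊤) :
    wsum a p (conv f g)
      ≤ ENNReal.ofReal (∑' α : A →₀ ℕ, 1 / (a α) ^ (p - q)) * wsum a q f * wsum a p g ∧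
    (wsum a p (conv f g)) ^ (2⁻¹ : ℝ)
      ≤ ENNReal.ofReal (Real.sqrt (∑' α : A →₀ ℕ, 1 / (a α) ^ (p - q)))
          * (wsum a q f) ^ (2⁻¹ : ℝ) * (wsum a p g) ^ (2⁻¹ : ℝ) := by
  set T : ℝ := ∑' α : A →₀ ℕ, 1 / (a α) ^ (p - q) with hT
  have hT0 : 0 ≤ T := tsum_nonneg fun α => by have := hpos α; positivity
  -- finite partial sums of the `T`-series over antidiagonals are bounded by `T`
  have haT : ∀ γ : A →₀ ℕ,
      ∑ x ∈ Finset.HasAntidiagonal.antidiagonal γ, 1 / (a x.1) ^ (p - q) ≤ T := by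
    intro γ
    have hinj : ∀ x ∈ Finset.HasAntidiagonal.antidiagonal γ, ∀ y ∈ Finset.HasAntidiagonal.antidiagonal γ,
        x.1 = y.1 → x = y := by
      intro x hx y hy hxy
      rw [Finset.HasAntidiagonal.mem_antidiagonal] at hx hy
      have : x.1 + x.2 = x.1 + y.2 := by rw [hx, hxy, hy]
      exact Prod.ext hxy (add_left_cancel this)
    calc ∑ x ∈ Finset.HasAntidiagonal.antidiagonal γ, 1 / (a x.1) ^ (p - q)
        = ∑ α ∈ (Finset.HasAntidiagonal.antidiagonal γ).image Prod.fst, 1 / (a α) ^ (p - q) :=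
          (Finset.sum_image (f := fun α : A →₀ ℕ => 1 / (a α) ^ (p - q)) hinj).symm
      _ ≤ T := Summable.sum_le_tsum _ (fun α _ => by have := hpos α; positivity) hS
  -- pointwise key inequality (real numbers)
  have key : ∀ γ : A →₀ ℕ, ‖conv f g γ‖ ^ 2 / a γ ^ p
      ≤ T * ∑ x ∈ Finset.HasAntidiagonal.antidiagonal γ,
          (‖f x.1‖ ^ 2 / (a x.1) ^ q) * (‖g x.2‖ ^ 2 / (a x.2) ^ p) := by
    intro γ
    set s := Finset.HasAntidiagonal.antidiagonal γ with hs
    set u : (A →₀ ℕ) × (A →₀ ℕ) → ℝ :=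
      fun x => ‖f x.1‖ * ‖g x.2‖ / Real.sqrt ((a x.1) ^ q * (a x.2) ^ p) with hu
    set v : (A →₀ ℕ) × (A →₀ ℕ) → ℝ :=
      fun x => Real.sqrt ((a x.1) ^ q * (a x.2) ^ p) with hv
    have hw : ∀ x : (A →₀ ℕ) × (A →₀ ℕ), 0 < (a x.1) ^ q * (a x.2) ^ p := by
      intro x
      have h1 := hpos x.1
      have h2 := hpos x.2
      positivity
    have huv : ∀ x, u x * v x = ‖f x.1‖ * ‖g x.2‖ := by
      intro x
      exact div_mul_cancel₀ _ (Real.sqrt_pos.mpr (hw x)).ne'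
    have h1 : ‖conv f g γ‖ ≤ ∑ x ∈ s, u x * v x := by
      refine (norm_sum_le _ _).trans (le_of_eq ?_)
      refine Finset.sum_congr rfl fun x _ => ?_
      rw [huv x, norm_mul]
    have h2 : ‖conv f g γ‖ ^ 2 ≤ (∑ x ∈ s, u x ^ 2) * (∑ x ∈ s, v x ^ 2) :=
      (pow_le_pow_left₀ (norm_nonneg _) h1 2).trans
        (Finset.sum_mul_sq_le_sq_mul_sq s u v)
    have hu2 : ∀ x, u x ^ 2 = (‖f x.1‖ ^ 2 / (a x.1) ^ q) * (‖g x.2‖ ^ 2 / (a x.2) ^ p) := by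
      intro x
      rw [hu]
      rw [div_pow, Real.sq_sqrt (hw x).le, mul_pow, div_mul_div_comm]
    have hv2 : ∑ x ∈ s, v x ^ 2 ≤ T * a γ ^ p := by
      have hb : ∀ x ∈ s, v x ^ 2 ≤ a γ ^ p * (1 / (a x.1) ^ (p - q)) := by
        intro x hx
        rw [hv, Real.sq_sqrt (hw x).le]
        have hγ : a x.1 * a x.2 ≤ a γ := by
          have h := hsup x.1 x.2
          rwa [Finset.HasAntidiagonal.mem_antidiagonal.mp hx] at h
        have h2 : a x.2 ^ p ≤ (a γ / a x.1) ^ p := by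
          refine pow_le_pow_left₀ (hpos x.2).le ?_ p
          rw [le_div_iff₀ (hpos x.1)]
          calc a x.2 * a x.1 = a x.1 * a x.2 := mul_comm _ _
            _ ≤ a γ := hγ
        calc (a x.1) ^ q * (a x.2) ^ p ≤ (a x.1) ^ q * ((a γ / a x.1) ^ p) :=
              mul_le_mul_of_nonneg_left h2 (pow_nonneg (hpos x.1).le q)
          _ = a γ ^ p * (1 / (a x.1) ^ (p - q)) := by
              have hxp : (a x.1) ^ p = (a x.1) ^ (p - q) * (a x.1) ^ q := by
                rw [← pow_add, Nat.sub_add_cancel hpq]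
              have h0 : (a x.1) ≠ 0 := (hpos x.1).ne'
              rw [div_pow]
              field_simp
              rw [hxp]
              ring
      calc ∑ x ∈ s, v x ^ 2 ≤ ∑ x ∈ s, a γ ^ p * (1 / (a x.1) ^ (p - q)) :=
            Finset.sum_le_sum hb
        _ = a γ ^ p * ∑ x ∈ s, 1 / (a x.1) ^ (p - q) := by rw [Finset.mul_sum]
        _ ≤ a γ ^ p * T := by
            refine mul_le_mul_of_nonneg_left (haT γ) ?_
            have := hpos γ; positivity
        _ = T * a γ ^ p := mul_comm _ _
    have hγp : (0 : ℝ) < a γ ^ p := by have := hpos γ; positivity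
    rw [div_le_iff₀ hγp]
    calc ‖conv f g γ‖ ^ 2 ≤ (∑ x ∈ s, u x ^ 2) * (T * a γ ^ p) :=
          h2.trans (mul_le_mul_of_nonneg_left hv2
            (Finset.sum_nonneg fun x _ => sq_nonneg _))
      _ = T * (∑ x ∈ s, (‖f x.1‖ ^ 2 / (a x.1) ^ q) * (‖g x.2‖ ^ 2 / (a x.2) ^ p))
            * a γ ^ p := by
          rw [Finset.sum_congr rfl fun x _ => hu2 x]
          ring
  -- ℝ≥0∞ version
  set F : (A →₀ ℕ) → ℝ≥0∞ := fun α => ENNReal.ofReal (‖f α‖ ^ 2 / (a α) ^ q) with hF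
  set G : (A →₀ ℕ) → ℝ≥0∞ := fun β => ENNReal.ofReal (‖g β‖ ^ 2 / (a β) ^ p) with hG
  have step : ∀ γ : A →₀ ℕ, ENNReal.ofReal (‖conv f g γ‖ ^ 2 / a γ ^ p)
      ≤ ENNReal.ofReal T * ∑ x ∈ Finset.HasAntidiagonal.antidiagonal γ, F x.1 * G x.2 := by
    intro γ
    refine (ENNReal.ofReal_le_ofReal (key γ)).trans (le_of_eq ?_)
    rw [ENNReal.ofReal_mul hT0]
    congr 1
    rw [ENNReal.ofReal_sum_of_nonneg (fun x _ => by
      have h1 := hpos x.1; have h2 := hpos x.2; positivity)]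
    refine Finset.sum_congr rfl fun x _ => ?_
    rw [ENNReal.ofReal_mul (by have := hpos x.1; positivity)]
  have main : wsum a p (conv f g) ≤ ENNReal.ofReal T * wsum a q f * wsum a p g := by
    calc wsum a p (conv f g)
        ≤ ∑' γ, (ENNReal.ofReal T * ∑ x ∈ Finset.HasAntidiagonal.antidiagonal γ, F x.1 * G x.2) :=
          ENNReal.tsum_le_tsum step
      _ = ENNReal.ofReal T * ∑' γ, ∑ x ∈ Finset.HasAntidiagonal.antidiagonal γ, F x.1 * G x.2 :=
          ENNReal.tsum_mul_left
      _ = ENNReal.ofReal T * ((∑' α, F α) * ∑' β, G β) := by rw [enn_cauchy]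
      _ = ENNReal.ofReal T * wsum a q f * wsum a p g := by
          rw [mul_assoc]; rfl
  refine ⟨main, ?_⟩
  have h2 := ENNReal.rpow_le_rpow main (by norm_num : (0 : ℝ) ≤ 2⁻¹)
  calc (wsum a p (conv f g)) ^ (2⁻¹ : ℝ)
      ≤ (ENNReal.ofReal T * wsum a q f * wsum a p g) ^ (2⁻¹ : ℝ) := h2
    _ = (ENNReal.ofReal T) ^ (2⁻¹ : ℝ) * (wsum a q f) ^ (2⁻¹ : ℝ)
          * (wsum a p g) ^ (2⁻¹ : ℝ) := by
        rw [ENNReal.mul_rpow_of_nonneg _ _ (by norm_num : (0 : ℝ) ≤ 2⁻¹),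
          ENNReal.mul_rpow_of_nonneg _ _ (by norm_num : (0 : ℝ) ≤ 2⁻¹)]
    _ = ENNReal.ofReal (Real.sqrt T) * (wsum a q f) ^ (2⁻¹ : ℝ)
          * (wsum a p g) ^ (2⁻¹ : ℝ) := by
        rw [ENNReal.ofReal_rpow_of_nonneg hT0 (by norm_num : (0 : ℝ) ≤ 2⁻¹),
          Real.sqrt_eq_rpow, one_div]
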